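/- Let d ≥ 15 be odd, d'' = d − 9, and let S be a 3-snake of length T in Q_{d''} satisfying the five snake conditions. Then the three sets I_0, J_2 and J_3 pairwise have no common neighbours in Q_d: there is no vertex of Q_d adjacent simultaneously to a vertex of I_0 and a vertex of J_2, none adjacent simultaneously to a vertex of I_0 and a vertex of J_3, and none adjacent simultaneously to a vertex of J_2 and a vertex of J_3. -/
import Mathlib


/-- A vertex of the `d`-dimensional hypercube `{0,1}^d`. -/
abbrev Cube (d : ℕ) := Fin d → Bool

/-- One step of `r`-neighbour bootstrap percolation on `Q_d`: a vertex becomes infected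
if it has at least `r` infected neighbours (neighbours = Hamming distance 1). -/
noncomputable def bootStep (d r : ℕ) (A : Set (Cube d)) : Set (Cube d) :=
  A ∪ {v | r ≤ {u : Cube d | hammingDist u v = 1 ∧ u ∈ A}.ncard}

/-- The set of infected sites at time `t`, starting from `A`. -/
noncomputable def boot (d r : ℕ) (A : Set (Cube d)) : ℕ → Set (Cube d)
  | 0 => A
  | t + 1 => bootStep d r (boot d r A t)

/-- `A` percolates: eventually every vertex is infected. -/
def Percolates (d r : ℕ) (A : Set (Cube d)) : Prop :=
  ∃ t, boot d r A t = Set.univ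

/-- The percolation time of `A`: the least `t` with all sites infected. -/
noncomputable def percTime (d r : ℕ) (A : Set (Cube d)) : ℕ :=
  sInf {t | boot d r A t = Set.univ}

/-- `M_r(d)`: the maximal percolation time over percolating subsets of `Q_d`. -/
noncomputable def maxPercTime (d r : ℕ) : ℕ :=
  sSup {T | ∃ A : Set (Cube d), Percolates d r A ∧ percTime d r A = T}

/-- The infection time `t_v` of a vertex `v`. -/
noncomputable def infTime (d r : ℕ) (A : Set (Cube d)) (v : Cube d) : ℕ :=
  sInf {t | v ∈ boot d r A t}

/-- A `k`-snake of length `T` in `Q_d`: a path `S_0, …, S_T` (consecutive vertices at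
Hamming distance 1, all vertices distinct) such that `d(S_t, S_{t'}) ≥ k` whenever
`t' − t ≥ k`. -/
def IsSnake (d k T : ℕ) (S : ℕ → Cube d) : Prop :=
  (∀ t, t < T → hammingDist (S t) (S (t + 1)) = 1) ∧
  (∀ t t', t ≤ T → t' ≤ T → S t = S t' → t = t') ∧
  (∀ t t', t' ≤ T → t + k ≤ t' → k ≤ hammingDist (S t) (S t'))

/-- `s(d)`: the maximal length of a `3`-snake in `Q_d`. -/
noncomputable def snakeMax (d : ℕ) : ℕ :=
  sSup {T | ∃ S : ℕ → Cube d, IsSnake d 3 T S}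

/-- `‖x‖`: the number of `1`-coordinates of `x`. -/
def wt {d : ℕ} (x : Cube d) : ℕ := hammingDist x (fun _ => false)

/-- The vertex of `Q_d` whose `1`-coordinates are exactly the positions in `s`
(0-indexed). -/
def ofOnes (d : ℕ) (s : Finset ℕ) : Cube d := fun i => decide (i.val ∈ s)

/-- `(b, a)`: the vertex of `Q_d` with first coordinate `b` and remaining coordinates `a`. -/
def extendCube (d : ℕ) (b : Bool) (a : Cube (d - 1)) : Cube d :=
  fun i => if h : i.val = 0 then b else a ⟨i.val - 1, by have := i.isLt; omega⟩

/-- `(y, x)`: the vertex of `Q_d` whose first `9` coordinates have `1`s exactly at the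
(0-indexed) positions in `ys ⊆ {0,…,8}` and whose last `d − 9` coordinates are `x`. -/
def embed9 (d : ℕ) (ys : Finset ℕ) (x : Cube (d - 9)) : Cube d :=
  fun i => if h : i.val < 9 then decide (i.val ∈ ys) else x ⟨i.val - 9, by have := i.isLt; omega⟩

/-- `J_1 = [1,1][*]^{d-2}`: vertices whose first two coordinates are `1`. -/
def J1 (d : ℕ) : Set (Cube d) := {x | ∀ i : Fin d, i.val < 2 → x i = true}

/-- `J_2`: the two vertices whose only `1`-coordinates are coordinate 3 together with
exactly one of coordinates 1 and 2 (1-indexed). -/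
def J2 (d : ℕ) : Set (Cube d) := {ofOnes d {0, 2}, ofOnes d {1, 2}}

/-- `J_3`: vertices with `(x_1,x_2,x_3) ∈ {(0,1,0),(1,0,0)}` whose last `d' = d-3`
coordinates form the word `0^{2l} 1 1 0^{d'-2-2l}` for some `0 ≤ l ≤ (d'-2)/2`. -/
def J3 (d : ℕ) : Set (Cube d) :=
  {x | ∃ l : ℕ, 2 * l + 2 ≤ d - 3 ∧
    (x = ofOnes d {0, 3 + 2 * l, 4 + 2 * l} ∨ x = ofOnes d {1, 3 + 2 * l, 4 + 2 * l})}

/-- The five snake conditions of Lemma 3 (for a `3`-snake of length `T` in `Q_{d''}`). -/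
def SnakeConds (d'' T : ℕ) (S : ℕ → Cube d'') : Prop :=
  S T = ofOnes d'' ∅ ∧ S (T - 1) = ofOnes d'' {0} ∧ S (T - 2) = ofOnes d'' {0, 2} ∧
  S (T - 3) = ofOnes d'' {0, 2, 4} ∧ ∀ t, t < T - 3 → 3 < wt (S t)

/-- `S^i = {S_{T-i-3j} : j ≥ 0, T-i-3j ≥ 0}`. -/
def SnakeTail (d'' T : ℕ) (S : ℕ → Cube d'') (i : ℕ) : Set (Cube d'') :=
  {x | ∃ j : ℕ, 3 * j + i ≤ T ∧ x = S (T - i - 3 * j)}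

/-- `I_0`: vertices whose last `d'' = d - 9` coordinates belong to `S^i` for some
`i ∈ {1,2,3}` and whose first `9` coordinates are all `0` except exactly one of the two
coordinates in (1-indexed) positions `2i+2` and `2i+3`, which equals `1`. -/
def I0 (d T : ℕ) (S : ℕ → Cube (d - 9)) : Set (Cube d) :=
  {v | ∃ i ∈ ({1, 2, 3} : Set ℕ), ∃ x ∈ SnakeTail (d - 9) T S i,
    v = embed9 d {2 * i + 1} x ∨ v = embed9 d {2 * i + 2} x}

lemma three_le_hammingDist {n : ℕ} {x y : Cube n} (i j k : Fin n)
    (hij : i ≠ j) (hik : i ≠ k) (hjk : j ≠ k)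
    (h1 : x i ≠ y i) (h2 : x j ≠ y j) (h3 : x k ≠ y k) : 3 ≤ hammingDist x y := by
  have hsub : ({i, j, k} : Finset (Fin n)) ⊆ Finset.univ.filter fun t => x t ≠ y t := by
    intro t ht
    simp only [Finset.mem_insert, Finset.mem_singleton] at ht
    simp only [Finset.mem_filter, Finset.mem_univ, true_and]
    rcases ht with rfl | rfl | rfl <;> assumption
  have hcard : ({i, j, k} : Finset (Fin n)).card = 3 := by
    rw [Finset.card_insert_of_notMem (by simp [hij, hik]),
        Finset.card_insert_of_notMem (by simp [hjk]), Finset.card_singleton]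
  calc 3 = ({i, j, k} : Finset (Fin n)).card := hcard.symm
    _ ≤ _ := Finset.card_le_card hsub
    _ = hammingDist x y := rfl

lemma tail_facts (d'' T : ℕ) (hd'' : 6 ≤ d'') (S : ℕ → Cube d'')
    (hconds : SnakeConds d'' T S) (t : ℕ) (ht : t < T) :
    (∃ j₀ : Fin d'', S t j₀ = true) ∧
    (∀ m₀ : ℕ, m₀ + 1 < d'' →
      ¬ ∀ j : Fin d'', S t j = (decide (j.val = m₀) || decide (j.val = m₀ + 1))) := by
  obtain ⟨h0, h1, h2, h3, h4⟩ := hconds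
  have hT3 : 3 ≤ T := by
    by_contra h
    have he : T - 2 = T - 3 := by omega
    have h23 : ofOnes d'' ({0, 2} : Finset ℕ) = ofOnes d'' {0, 2, 4} := by
      rw [← h2, he]; exact h3
    have := congrFun h23 ⟨4, by omega⟩
    simp [ofOnes] at this
  have hcase : t = T - 1 ∨ t = T - 2 ∨ t = T - 3 ∨ t < T - 3 := by omega
  constructor
  · rcases hcase with rfl | rfl | rfl | hlt
    · exact ⟨⟨0, by omega⟩, by simp [h1, ofOnes]⟩
    · exact ⟨⟨0, by omega⟩, by simp [h2, ofOnes]⟩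
    · exact ⟨⟨0, by omega⟩, by simp [h3, ofOnes]⟩
    · by_contra hno
      push_neg at hno
      have hz : ∀ j, S t j = false := fun j => by simpa using hno j
      have hwt : wt (S t) = 0 := by simp [wt, hammingDist, hz]
      have := h4 t hlt
      omega
  · intro m₀ hm₀ hall
    rcases hcase with rfl | rfl | rfl | hlt
    · have e := hall ⟨m₀ + 1, hm₀⟩
      rw [h1, Bool.eq_iff_iff] at e
      simp [ofOnes] at e
    · have e1 := hall ⟨m₀, by omega⟩
      have e2 := hall ⟨m₀ + 1, hm₀⟩
      rw [h2, Bool.eq_iff_iff] at e1 e2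
      simp [ofOnes] at e1 e2
      omega
    · have e1 := hall ⟨m₀, by omega⟩
      have e2 := hall ⟨m₀ + 1, hm₀⟩
      rw [h3, Bool.eq_iff_iff] at e1 e2
      simp [ofOnes] at e1 e2
      omega
    · have h4t := h4 t hlt
      have hsub2 : (Finset.univ.filter fun i : Fin d'' => S t i ≠ false) ⊆
          {⟨m₀, by omega⟩, ⟨m₀ + 1, hm₀⟩} := by
        intro j hj
        simp only [Finset.mem_filter, Finset.mem_univ, true_and, ne_eq,
          Bool.not_eq_false] at hj
        have hj2 := hall j
        rw [hj] at hj2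
        simp only [Finset.mem_insert, Finset.mem_singleton, Fin.ext_iff]
        rcases Bool.or_eq_true _ _ |>.mp hj2.symm with h | h <;>
          simp only [decide_eq_true_eq] at h <;> omega
      have hle : wt (S t) ≤ 2 := by
        have : wt (S t) = (Finset.univ.filter fun i : Fin d'' => S t i ≠ false).card := rfl
        rw [this]
        exact (Finset.card_le_card hsub2).trans
          ((Finset.card_insert_le _ _).trans (by simp))
      omega

lemma embed9_lt {d : ℕ} (ys : Finset ℕ) (x : Cube (d - 9)) (k : ℕ) (hk : k < d)
    (h9 : k < 9) : embed9 d ys x ⟨k, hk⟩ = decide (k ∈ ys) := by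
  simp [embed9, h9]

lemma embed9_ge {d : ℕ} (ys : Finset ℕ) (x : Cube (d - 9)) (k : ℕ) (hk : k < d)
    (h9 : 9 ≤ k) : embed9 d ys x ⟨k, hk⟩ = x ⟨k - 9, by omega⟩ := by
  have h : ¬ ((⟨k, hk⟩ : Fin d).val < 9) := by simp only [Fin.val_mk]; omega
  rw [embed9, dif_neg h]

lemma ofOnes_apply (d : ℕ) (s : Finset ℕ) (k : ℕ) (hk : k < d) :
    ofOnes d s ⟨k, hk⟩ = decide (k ∈ s) := rfl

/-- Let `d ≥ 15` be odd, `d'' = d − 9`, and let `S` be a `3`-snake of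
length `T` in `Q_{d''}` satisfying the five snake conditions. Then `I_0`, `J_2` and `J_3`
pairwise have no common neighbours in `Q_d`. -/
theorem stmt18 (d : ℕ) (hd : 15 ≤ d) (hodd : Odd d) (T : ℕ) (S : ℕ → Cube (d - 9))
    (hsnake : IsSnake (d - 9) 3 T S) (hconds : SnakeConds (d - 9) T S) :
    (¬ ∃ v : Cube d, (∃ a ∈ I0 d T S, hammingDist v a = 1) ∧
        (∃ b ∈ J2 d, hammingDist v b = 1)) ∧
    (¬ ∃ v : Cube d, (∃ a ∈ I0 d T S, hammingDist v a = 1) ∧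
        (∃ b ∈ J3 d, hammingDist v b = 1)) ∧
    (¬ ∃ v : Cube d, (∃ a ∈ J2 d, hammingDist v a = 1) ∧
        (∃ b ∈ J3 d, hammingDist v b = 1)) := by
  have hdd : 6 ≤ d - 9 := by omega
  have hA : ∀ a ∈ I0 d T S, ∃ p x, 3 ≤ p ∧ p ≤ 8 ∧ a = embed9 d {p} x ∧
      (∃ j₀ : Fin (d - 9), x j₀ = true) ∧
      (∀ m₀ : ℕ, m₀ + 1 < d - 9 →
        ¬ ∀ j : Fin (d - 9), x j = (decide (j.val = m₀) || decide (j.val = m₀ + 1))) := by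
    rintro a ⟨i, hi, x, ⟨j, hj, rfl⟩, hcase⟩
    have hi' : i = 1 ∨ i = 2 ∨ i = 3 := by simpa using hi
    have ht : T - i - 3 * j < T := by omega
    obtain ⟨hx1, hx2⟩ := tail_facts (d - 9) T hdd S hconds _ ht
    rcases hcase with rfl | rfl
    · exact ⟨2 * i + 1, _, by omega, by omega, rfl, hx1, hx2⟩
    · exact ⟨2 * i + 2, _, by omega, by omega, rfl, hx1, hx2⟩
  have hB2 : ∀ b ∈ J2 d, ∃ q, q ≤ 1 ∧ b = ofOnes d {q, 2} := by
    intro b hb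
    simp only [J2, Set.mem_insert_iff, Set.mem_singleton_iff] at hb
    rcases hb with rfl | rfl
    exacts [⟨0, by omega, rfl⟩, ⟨1, by omega, rfl⟩]
  have hB3 : ∀ b ∈ J3 d, ∃ q l, q ≤ 1 ∧ 2 * l + 2 ≤ d - 3 ∧
      b = ofOnes d {q, 3 + 2 * l, 4 + 2 * l} := by
    rintro b ⟨l, hl, h | h⟩
    exacts [⟨0, l, by omega, hl, h⟩, ⟨1, l, by omega, hl, h⟩]
  have htri : ∀ v a b : Cube d, hammingDist v a = 1 → hammingDist v b = 1 →
      hammingDist a b ≤ 2 := by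
    intro v a b h1 h2
    have := hammingDist_triangle a v b
    rw [hammingDist_comm a v, h1, h2] at this
    omega
  refine ⟨?_, ?_, ?_⟩
  · rintro ⟨v, ⟨a, ha, hva⟩, ⟨b, hb, hvb⟩⟩
    obtain ⟨p, x, hp3, hp8, rfl, ⟨j₀, hj₀⟩, hword⟩ := hA a ha
    obtain ⟨q, hq, rfl⟩ := hB2 b hb
    have h3 : 3 ≤ hammingDist (embed9 d {p} x) (ofOnes d {q, 2}) := by
      refine three_le_hammingDist (⟨q, by omega⟩ : Fin d) ⟨2, by omega⟩ ⟨p, by omega⟩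
        ?_ ?_ ?_ ?_ ?_ ?_
      · simp [Fin.ext_iff] <;> omega
      · simp [Fin.ext_iff] <;> omega
      · simp [Fin.ext_iff] <;> omega
      · rw [embed9_lt _ _ _ _ (by omega), ofOnes_apply]
        simp only [ne_eq, decide_eq_decide, Finset.mem_insert, Finset.mem_singleton,
          eq_self_iff_true, true_or, or_true, iff_true, true_iff] <;>
            omega
      · rw [embed9_lt _ _ _ _ (by omega), ofOnes_apply]
        simp only [ne_eq, decide_eq_decide, Finset.mem_insert, Finset.mem_singleton,
          eq_self_iff_true, true_or, or_true, iff_true, true_iff] <;>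
            omega
      · rw [embed9_lt _ _ _ _ (by omega), ofOnes_apply]
        simp only [ne_eq, decide_eq_decide, Finset.mem_insert, Finset.mem_singleton,
          eq_self_iff_true, true_or, or_true, iff_true, true_iff] <;>
            omega
    have := htri v _ _ hva hvb
    omega
  · rintro ⟨v, ⟨a, ha, hva⟩, ⟨b, hb, hvb⟩⟩
    obtain ⟨p, x, hp3, hp8, rfl, ⟨j₀, hj₀⟩, hword⟩ := hA a ha
    obtain ⟨q, l, hq, hl, rfl⟩ := hB3 b hb
    have h3 : 3 ≤ hammingDist (embed9 d {p} x) (ofOnes d {q, 3 + 2 * l, 4 + 2 * l}) := by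
      by_cases hm : 3 + 2 * l < 9
      · obtain ⟨r, hrm, hrp, hr3, hr9⟩ :
            ∃ r, (r = 3 + 2 * l ∨ r = 4 + 2 * l) ∧ r ≠ p ∧ 3 ≤ r ∧ r < 9 := by
          rcases eq_or_ne p (3 + 2 * l) with h | h
          · exact ⟨4 + 2 * l, Or.inr rfl, by omega, by omega, by omega⟩
          · exact ⟨3 + 2 * l, Or.inl rfl, by omega, by omega, by omega⟩
        have hj₀d : 9 + (j₀ : ℕ) < d := by have := j₀.isLt; omega
        refine three_le_hammingDist (⟨q, by omega⟩ : Fin d) ⟨r, by omega⟩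
          ⟨9 + (j₀ : ℕ), hj₀d⟩ ?_ ?_ ?_ ?_ ?_ ?_
        · simp [Fin.ext_iff] <;> omega
        · simp [Fin.ext_iff] <;> omega
        · simp [Fin.ext_iff] <;> omega
        · rw [embed9_lt _ _ _ _ (by omega), ofOnes_apply]
          simp only [ne_eq, decide_eq_decide, Finset.mem_insert, Finset.mem_singleton,
          eq_self_iff_true, true_or, or_true, iff_true, true_iff] <;>
            omega
        · rw [embed9_lt _ _ _ _ (by omega), ofOnes_apply]
          simp only [ne_eq, decide_eq_decide, Finset.mem_insert, Finset.mem_singleton,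
          eq_self_iff_true, true_or, or_true, iff_true, true_iff] <;>
            omega
        · rw [embed9_ge _ _ _ _ (by omega), ofOnes_apply]
          have he : (⟨9 + (j₀ : ℕ) - 9, by omega⟩ : Fin (d - 9)) = j₀ := by
            apply Fin.ext; simp
          rw [he, hj₀]
          intro hEq
          have hP := of_decide_eq_true hEq.symm
          simp only [Finset.mem_insert, Finset.mem_singleton] at hP
          have := j₀.isLt
          omega
      · have hk := hword (3 + 2 * l - 9) (by omega)
        obtain ⟨k₀, hk₀⟩ := not_forall.mp hk
        have hk₀d : 9 + (k₀ : ℕ) < d := by have := k₀.isLt; omega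
        refine three_le_hammingDist (⟨q, by omega⟩ : Fin d) ⟨p, by omega⟩
          ⟨9 + (k₀ : ℕ), hk₀d⟩ ?_ ?_ ?_ ?_ ?_ ?_
        · simp [Fin.ext_iff] <;> omega
        · simp [Fin.ext_iff] <;> omega
        · simp [Fin.ext_iff] <;> omega
        · rw [embed9_lt _ _ _ _ (by omega), ofOnes_apply]
          simp only [ne_eq, decide_eq_decide, Finset.mem_insert, Finset.mem_singleton,
          eq_self_iff_true, true_or, or_true, iff_true, true_iff] <;>
            omega
        · rw [embed9_lt _ _ _ _ (by omega), ofOnes_apply]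
          simp only [ne_eq, decide_eq_decide, Finset.mem_insert, Finset.mem_singleton,
          eq_self_iff_true, true_or, or_true, iff_true, true_iff] <;>
            omega
        · rw [embed9_ge _ _ _ _ (by omega), ofOnes_apply]
          have he : (⟨9 + (k₀ : ℕ) - 9, by omega⟩ : Fin (d - 9)) = k₀ := by
            apply Fin.ext; simp
          rw [he]
          intro hEq
          apply hk₀
          rw [hEq, Bool.eq_iff_iff]
          simp only [Finset.mem_insert, Finset.mem_singleton, Bool.or_eq_true,
            decide_eq_true_eq]
          have := k₀.isLt
          omega
    have := htri v _ _ hva hvb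
    omega
  · rintro ⟨v, ⟨a, ha, hva⟩, ⟨b, hb, hvb⟩⟩
    obtain ⟨q', hq', rfl⟩ := hB2 a ha
    obtain ⟨q, l, hq, hl, rfl⟩ := hB3 b hb
    have h3 : 3 ≤ hammingDist (ofOnes d {q', 2}) (ofOnes d {q, 3 + 2 * l, 4 + 2 * l}) := by
      refine three_le_hammingDist (⟨2, by omega⟩ : Fin d) ⟨3 + 2 * l, by omega⟩
        ⟨4 + 2 * l, by omega⟩ ?_ ?_ ?_ ?_ ?_ ?_
      · simp [Fin.ext_iff] <;> omega
      · simp [Fin.ext_iff] <;> omega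
      · simp [Fin.ext_iff] <;> omega
      · rw [ofOnes_apply, ofOnes_apply]; simp only [ne_eq, decide_eq_decide, Finset.mem_insert, Finset.mem_singleton,
          eq_self_iff_true, true_or, or_true, iff_true, true_iff] <;>
            omega
      · rw [ofOnes_apply, ofOnes_apply]; simp only [ne_eq, decide_eq_decide, Finset.mem_insert, Finset.mem_singleton,
          eq_self_iff_true, true_or, or_true, iff_true, true_iff] <;>
            omega
      · rw [ofOnes_apply, ofOnes_apply]; simp only [ne_eq, decide_eq_decide, Finset.mem_insert, Finset.mem_singleton,
          eq_self_iff_true, true_or, or_true, iff_true, true_iff] <;>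
            omega
    have := htri v _ _ hva hvb
    omega
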